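/- Over any ring A, the class of A-modules of finite Gorenstein projective dimension is closed under extensions and under direct summands. -/

import Mathlib

open CategoryTheory CategoryTheory.Limits

universe v u

variable (C : Type u) [Category.{v} C] [Abelian C]

/-- A totally acyclic complex of projectives. -/
def IsTotallyAcyclicProjComplex (P : ChainComplex C (ℤ)) : Prop :=
  (∀ n, Projective (P.X n)) ∧ (∀ n, P.ExactAt n) ∧
    ∀ (Q : C), Projective Q → ∀ (n : ℤ) (f : P.X n ⟶ Q), P.d (n + 1) n ≫ f = 0 →
      ∃ g : P.X (n - 1) ⟶ Q, P.d n (n - 1) ≫ g = f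

/-- A totally acyclic complex of injectives. -/
def IsTotallyAcyclicInjComplex (I : ChainComplex C (ℤ)) : Prop :=
  (∀ n, Injective (I.X n)) ∧ (∀ n, I.ExactAt n) ∧
    ∀ (E : C), Injective E → ∀ (n : ℤ) (f : E ⟶ I.X n), f ≫ I.d n (n - 1) = 0 →
      ∃ g : E ⟶ I.X (n + 1), g ≫ I.d (n + 1) n = f

variable {C}

/-- Gorenstein projective object: a cycle of a totally acyclic complex of projectives. -/
def IsGorensteinProjective (G : C) : Prop :=
  ∃ P : ChainComplex C (ℤ), IsTotallyAcyclicProjComplex C P ∧ ∃ j : ℤ, Nonempty (G ≅ P.cycles j)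

/-- Gorenstein injective object: a cycle of a totally acyclic complex of injectives. -/
def IsGorensteinInjective (H : C) : Prop :=
  ∃ I : ChainComplex C (ℤ), IsTotallyAcyclicInjComplex C I ∧ ∃ j : ℤ, Nonempty (H ≅ I.cycles j)

/-- `0 → X → Y → Z → 0` is a short exact sequence. -/
def IsShortExactSeq {X Y Z : C} (f : X ⟶ Y) (g : Y ⟶ Z) : Prop :=
  ∃ w : f ≫ g = 0, (ShortComplex.mk f g w).ShortExact

/-- Projective dimension at most `n`. -/
def pdLE : ℕ → C → Prop
  | 0, M => Projective M
  | n + 1, M => ∃ (K P : C) (f : K ⟶ P) (g : P ⟶ M),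
      IsShortExactSeq f g ∧ Projective P ∧ pdLE n K

/-- Injective dimension at most `n`. -/
def idLE : ℕ → C → Prop
  | 0, M => Injective M
  | n + 1, M => ∃ (J L : C) (f : M ⟶ J) (g : J ⟶ L),
      IsShortExactSeq f g ∧ Injective J ∧ idLE n L

/-- Gorenstein projective dimension at most `n`. -/
def gpdLE : ℕ → C → Prop
  | 0, M => IsGorensteinProjective M
  | n + 1, M => ∃ (K G : C) (f : K ⟶ G) (g : G ⟶ M),
      IsShortExactSeq f g ∧ IsGorensteinProjective G ∧ gpdLE n K

/-- Gorenstein injective dimension at most `n`. -/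
def gidLE : ℕ → C → Prop
  | 0, M => IsGorensteinInjective M
  | n + 1, M => ∃ (H L : C) (f : M ⟶ H) (g : H ⟶ L),
      IsShortExactSeq f g ∧ IsGorensteinInjective H ∧ gidLE n L

/-- Vanishing of `Ext^i` in the category of `A`-modules. -/
def extVanish (A : Type u) [Ring A] (X Y : ModuleCat.{u} A) (i : ℕ) : Prop :=
  Subsingleton (((Ext ℤ (ModuleCat.{u} A) i).obj (Opposite.op X)).obj Y)


namespace GPaux

open CategoryTheory CategoryTheory.Limits

variable {A : Type u} [Ring A]

/-! ### SES toolkit -/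

lemma ses_mk {X Y Z : ModuleCat.{u} A} (f : X ⟶ Y) (g : Y ⟶ Z)
    (hf : Function.Injective f) (hg : Function.Surjective g)
    (hex : ∀ y, g y = 0 ↔ ∃ x, f x = y) : IsShortExactSeq f g := by
  have w : f ≫ g = 0 := by
    ext x
    exact (hex (f x)).mpr ⟨x, rfl⟩
  refine ⟨w, ?_⟩
  haveI : Mono f := (ModuleCat.mono_iff_injective f).mpr hf
  haveI : Epi g := (ModuleCat.epi_iff_surjective g).mpr hg
  haveI : Mono (ShortComplex.mk f g w).f := by assumption
  haveI : Epi (ShortComplex.mk f g w).g := by assumption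
  exact { exact := (ShortComplex.moduleCat_exact_iff _).mpr (fun y hy => (hex y).mp hy) }

lemma ses_inj {X Y Z : ModuleCat.{u} A} {f : X ⟶ Y} {g : Y ⟶ Z}
    (h : IsShortExactSeq f g) : Function.Injective f :=
  h.2.moduleCat_injective_f

lemma ses_surj {X Y Z : ModuleCat.{u} A} {f : X ⟶ Y} {g : Y ⟶ Z}
    (h : IsShortExactSeq f g) : Function.Surjective g :=
  h.2.moduleCat_surjective_g

lemma ses_exact {X Y Z : ModuleCat.{u} A} {f : X ⟶ Y} {g : Y ⟶ Z}
    (h : IsShortExactSeq f g) : ∀ y, g y = 0 ↔ ∃ x, f x = y := by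
  intro y
  constructor
  · intro hy
    exact (ShortComplex.moduleCat_exact_iff _).mp h.2.exact y hy
  · rintro ⟨x, rfl⟩
    have := h.1
    calc g (f x) = (f ≫ g) x := rfl
    _ = (0 : X ⟶ Z) x := by rw [this]
    _ = 0 := rfl

lemma ses_comp_zero {X Y Z : ModuleCat.{u} A} {f : X ⟶ Y} {g : Y ⟶ Z}
    (h : IsShortExactSeq f g) (x : X) : g (f x) = 0 :=
  (ses_exact h (f x)).mpr ⟨x, rfl⟩

end GPaux
namespace GPaux

open CategoryTheory CategoryTheory.Limits

variable {A : Type u} [Ring A]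

/-! ### projectivity bridges, cycles, exactness -/

lemma projOf {M : Type u} [AddCommGroup M] [Module A M] (h : Module.Projective A M) :
    Projective (ModuleCat.of A M) := (IsProjective.iff_projective M).mp h

lemma ofProj (P : ModuleCat.{u} A) (h : Projective P) : Module.Projective A P :=
  (IsProjective.iff_projective (R := A) P).mpr h

noncomputable def cyclesKerIso (P : ChainComplex (ModuleCat.{u} A) ℤ) (j : ℤ) :
    P.cycles j ≅ ModuleCat.of A (LinearMap.ker (P.d j (j-1)).hom) :=
  IsLimit.conePointUniqueUpToIso
    (P.cyclesIsKernel j (j-1) (ComplexShape.next_eq' _ (by simp)))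
    (ModuleCat.kernelIsLimit _)

lemma exact_concrete {P : ChainComplex (ModuleCat.{u} A) ℤ} {n : ℤ} (h : P.ExactAt n) :
    ∀ x : P.X n, P.d n (n-1) x = 0 → ∃ y : P.X (n+1), P.d (n+1) n y = x := by
  have h' := (P.exactAt_iff' (n+1) n (n-1) (ComplexShape.prev_eq' _ (by simp))
    (ComplexShape.next_eq' _ (by simp))).mp h
  exact fun x hx => (ShortComplex.moduleCat_exact_iff _).mp h' x hx

lemma exact_mk {P : ChainComplex (ModuleCat.{u} A) ℤ} {n : ℤ}
    (h : ∀ x : P.X n, P.d n (n-1) x = 0 → ∃ y : P.X (n+1), P.d (n+1) n y = x) :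
    P.ExactAt n := by
  rw [P.exactAt_iff' (n+1) n (n-1) (ComplexShape.prev_eq' _ (by simp))
    (ComplexShape.next_eq' _ (by simp))]
  exact (ShortComplex.moduleCat_exact_iff _).mpr h

/-! ### iso invariance -/

lemma gp_of_iso {G G' : ModuleCat.{u} A} (e : G' ≅ G) (h : IsGorensteinProjective G) :
    IsGorensteinProjective G' := by
  obtain ⟨P, hP, j, ⟨eG⟩⟩ := h
  exact ⟨P, hP, j, ⟨e.trans eG⟩⟩

lemma gpd_of_iso {M M' : ModuleCat.{u} A} (e : M ≅ M') {n : ℕ} (h : gpdLE n M) :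
    gpdLE n M' := by
  cases n with
  | zero => exact gp_of_iso e.symm h
  | succ n =>
    obtain ⟨K, G, f, g, hses, hG, hK⟩ := h
    refine ⟨K, G, f, g ≫ e.hom, ?_, hG, hK⟩
    have einj : Function.Injective e.hom := e.toLinearEquiv.injective
    have esurj : Function.Surjective e.hom := e.toLinearEquiv.surjective
    refine ses_mk _ _ (ses_inj hses) ?_ ?_
    · intro y
      obtain ⟨y', hy'⟩ := esurj y
      obtain ⟨m, hm⟩ := ses_surj hses y'
      exact ⟨m, by show e.hom (g m) = y; rw [hm, hy']⟩
    · intro y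
      show e.hom (g y) = 0 ↔ _
      constructor
      · intro hy
        have hgy : g y = 0 := einj (by rw [hy, map_zero])
        exact (ses_exact hses y).mp hgy
      · intro hx
        have : g y = 0 := (ses_exact hses y).mpr hx
        rw [this, map_zero]

end GPaux
namespace GPaux

open CategoryTheory CategoryTheory.Limits

variable {A : Type u} [Ring A]

/-! ### the constant totally acyclic complex of a projective -/

def swapMap (Q : ModuleCat.{u} A) :
    ModuleCat.of A (↑Q × ↑Q) ⟶ ModuleCat.of A (↑Q × ↑Q) :=
  ModuleCat.ofHom ((LinearMap.inl A ↑Q ↑Q).comp (LinearMap.snd A ↑Q ↑Q))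

@[simp] lemma swapMap_apply (Q : ModuleCat.{u} A) (x : ↑Q × ↑Q) :
    swapMap Q x = (x.2, 0) := rfl

def constComplex (Q : ModuleCat.{u} A) : ChainComplex (ModuleCat.{u} A) ℤ where
  X _ := ModuleCat.of A (↑Q × ↑Q)
  d i j := if h : j + 1 = i then swapMap Q else 0
  shape i j h := dif_neg (by simpa using h)
  d_comp_d' i j k hij hjk := by
    show (if h : j + 1 = i then swapMap Q else 0) ≫ (if h : k + 1 = j then swapMap Q else 0) = 0
    rw [dif_pos (by simpa using hij), dif_pos (by simpa using hjk)]
    refine ModuleCat.hom_ext (LinearMap.ext fun (x : ↑Q × ↑Q) => ?_)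
    show swapMap Q (swapMap Q x) = 0
    rfl

lemma constComplex_d (Q : ModuleCat.{u} A) {i j : ℤ} (h : j + 1 = i) :
    (constComplex Q).d i j = swapMap Q := dif_pos h

lemma constComplex_totAcyclic {Q : ModuleCat.{u} A} (hQ : Projective Q) :
    IsTotallyAcyclicProjComplex (ModuleCat.{u} A) (constComplex Q) := by
  have hQ' := ofProj Q hQ
  refine ⟨fun n => projOf inferInstance, fun n => ?_, fun R hR n f hf => ?_⟩
  · apply exact_mk
    intro (x : ↑Q × ↑Q) hx
    rw [constComplex_d Q (by ring)] at hx
    refine ⟨((0 : ↑Q), x.1), ?_⟩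
    rw [constComplex_d Q rfl]
    have hx2 : x.2 = 0 := by
      have := congrArg Prod.fst hx
      exact this
    show ((x.1 : ↑Q), (0:↑Q)) = x
    rw [Prod.ext_iff]
    exact ⟨rfl, hx2.symm⟩
  · -- lifting
    rw [constComplex_d Q rfl] at hf
    refine ⟨ModuleCat.ofHom (f.hom.comp ((LinearMap.inr A ↑Q ↑Q).comp (LinearMap.fst A ↑Q ↑Q))), ?_⟩
    rw [constComplex_d Q (by ring)]
    refine ModuleCat.hom_ext (LinearMap.ext fun (x : ↑Q × ↑Q) => ?_)
    show f ((0 : ↑Q), x.2) = f x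
    have h1 : f ((x.1 : ↑Q), (0 : ↑Q)) = 0 := by
      have h2 : ((x.1 : ↑Q), (0:↑Q)) = swapMap Q ((0 : ↑Q), x.1) := rfl
      rw [h2]
      exact ConcreteCategory.congr_hom hf ((0 : ↑Q), x.1)
    have h3 : f x = f ((x.1, (0:↑Q)) + ((0:↑Q), x.2)) := by
      congr 1
      exact Prod.ext (by simp) (by simp)
    erw [h3, map_add, h1, zero_add]

noncomputable def constComplexCyclesEquiv (Q : ModuleCat.{u} A) (j : ℤ) :
    ↑Q ≃ₗ[A] LinearMap.ker ((constComplex Q).d j (j-1)).hom := by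
  rw [constComplex_d Q (by ring)]
  exact LinearEquiv.ofBijective
    (LinearMap.codRestrict _ (LinearMap.inl A ↑Q ↑Q) (fun q => by
      show swapMap Q (q, 0) = 0; rfl))
    ⟨fun a b hab => by
        have h2 := Subtype.ext_iff.mp hab
        have h3 := congrArg Prod.fst h2
        exact h3,
     fun ⟨x, hx⟩ => ⟨x.1, by
        have hx2 : x.2 = 0 := by
          have : swapMap Q x = 0 := hx
          have := congrArg Prod.fst this
          exact this
        apply Subtype.ext
        show ((x.1 : ↑Q), (0:↑Q)) = x
        rw [Prod.ext_iff]
        exact ⟨rfl, hx2.symm⟩⟩⟩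

lemma gp_proj {Q : ModuleCat.{u} A} (hQ : Projective Q) : IsGorensteinProjective Q :=
  ⟨constComplex Q, constComplex_totAcyclic hQ, 0,
    ⟨(constComplexCyclesEquiv Q 0).toModuleIso.trans (cyclesKerIso (constComplex Q) 0).symm⟩⟩

end GPaux
namespace GPaux

open CategoryTheory CategoryTheory.Limits

variable {A : Type u} [Ring A]

/-! ### product of complexes -/

def prodComplex (P P' : ChainComplex (ModuleCat.{u} A) ℤ) : ChainComplex (ModuleCat.{u} A) ℤ where
  X n := ModuleCat.of A (↑(P.X n) × ↑(P'.X n))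
  d i j := ModuleCat.ofHom (LinearMap.prodMap (P.d i j).hom (P'.d i j).hom)
  shape i j h := by
    refine ModuleCat.hom_ext (LinearMap.ext (fun (x : ↑(P.X i) × ↑(P'.X i)) => ?_))
    show ((P.d i j) x.1, (P'.d i j) x.2) = 0
    rw [P.shape i j h, P'.shape i j h]
    rfl
  d_comp_d' i j k _ _ := by
    refine ModuleCat.hom_ext (LinearMap.ext fun (x : ↑(P.X i) × ↑(P'.X i)) => ?_)
    have h1 := ConcreteCategory.congr_hom (P.d_comp_d i j k) x.1
    have h2 := ConcreteCategory.congr_hom (P'.d_comp_d i j k) x.2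
    show (P.d j k (P.d i j x.1), P'.d j k (P'.d i j x.2)) = 0
    rw [Prod.ext_iff]
    exact ⟨h1, h2⟩

lemma prodComplex_totAcyclic {P P' : ChainComplex (ModuleCat.{u} A) ℤ}
    (h : IsTotallyAcyclicProjComplex (ModuleCat.{u} A) P)
    (h' : IsTotallyAcyclicProjComplex (ModuleCat.{u} A) P') :
    IsTotallyAcyclicProjComplex (ModuleCat.{u} A) (prodComplex P P') := by
  obtain ⟨hproj, hex, hlift⟩ := h
  obtain ⟨hproj', hex', hlift'⟩ := h'
  refine ⟨fun n => ?_, fun n => ?_, fun R hR n f hf => ?_⟩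
  · have i1 := ofProj _ (hproj n)
    have i2 := ofProj _ (hproj' n)
    exact projOf (M := ↑(P.X n) × ↑(P'.X n)) inferInstance
  · apply exact_mk
    intro (x : ↑(P.X n) × ↑(P'.X n)) hx
    have hx1 : P.d n (n-1) x.1 = 0 := congrArg Prod.fst hx
    have hx2 : P'.d n (n-1) x.2 = 0 := congrArg Prod.snd hx
    obtain ⟨y1, hy1⟩ := exact_concrete (hex n) x.1 hx1
    obtain ⟨y2, hy2⟩ := exact_concrete (hex' n) x.2 hx2
    refine ⟨(y1, y2), ?_⟩
    show (P.d (n+1) n y1, P'.d (n+1) n y2) = x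
    rw [Prod.ext_iff]
    exact ⟨hy1, hy2⟩
  · have hf1 : P.d (n+1) n ≫ ModuleCat.ofHom (f.hom.comp (LinearMap.inl A ↑(P.X n) ↑(P'.X n))) = 0 := by
      ext x
      have h0 : (prodComplex P P').d (n+1) n (x, 0) = ((P.d (n+1) n x : ↑(P.X n)), (0 : ↑(P'.X n))) := by
        show (P.d (n+1) n x, P'.d (n+1) n 0) = _
        rw [map_zero]
      have h1 := ConcreteCategory.congr_hom hf ((x, 0) : ↑(P.X (n+1)) × ↑(P'.X (n+1)))
      show f ((P.d (n+1) n x : ↑(P.X n)), (0 : ↑(P'.X n))) = 0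
      rw [← h0]
      exact h1
    have hf2 : P'.d (n+1) n ≫ ModuleCat.ofHom (f.hom.comp (LinearMap.inr A ↑(P.X n) ↑(P'.X n))) = 0 := by
      ext x
      have h0 : (prodComplex P P').d (n+1) n (0, x) = ((0 : ↑(P.X n)), (P'.d (n+1) n x : ↑(P'.X n))) := by
        show (P.d (n+1) n 0, P'.d (n+1) n x) = _
        rw [map_zero]
      have h1 := ConcreteCategory.congr_hom hf ((0, x) : ↑(P.X (n+1)) × ↑(P'.X (n+1)))
      show f ((0 : ↑(P.X n)), (P'.d (n+1) n x : ↑(P'.X n))) = 0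
      rw [← h0]
      exact h1
    obtain ⟨g1, hg1⟩ := hlift R hR n _ hf1
    obtain ⟨g2, hg2⟩ := hlift' R hR n _ hf2
    refine ⟨ModuleCat.ofHom (g1.hom.comp (LinearMap.fst A _ _) + g2.hom.comp (LinearMap.snd A _ _)), ?_⟩
    refine ModuleCat.hom_ext (LinearMap.ext fun (x : ↑(P.X n) × ↑(P'.X n)) => ?_)
    have e1 := ConcreteCategory.congr_hom hg1 x.1
    have e2 := ConcreteCategory.congr_hom hg2 x.2
    show g1 (P.d n (n-1) x.1) + g2 (P'.d n (n-1) x.2) = f x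
    have e1' : g1 (P.d n (n-1) x.1) = f (x.1, (0 : ↑(P'.X n))) := e1
    have e2' : g2 (P'.d n (n-1) x.2) = f ((0 : ↑(P.X n)), x.2) := e2
    erw [e1', e2', ← map_add]
    congr 1
    show ((x.1, 0) + (0, x.2) : ↑(P.X n) × ↑(P'.X n)) = x
    rw [Prod.ext_iff]
    refine ⟨?_, ?_⟩
    · show x.1 + 0 = x.1
      rw [add_zero]
    · show 0 + x.2 = x.2
      rw [zero_add]

noncomputable def kerProdEquiv {M M' N N' : Type u} [AddCommGroup M] [AddCommGroup M'] [AddCommGroup N]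
    [AddCommGroup N'] [Module A M] [Module A M'] [Module A N] [Module A N']
    (φ : M →ₗ[A] N) (ψ : M' →ₗ[A] N') :
    (LinearMap.ker φ × LinearMap.ker ψ) ≃ₗ[A] LinearMap.ker (φ.prodMap ψ) :=
  LinearEquiv.ofBijective
    ((((LinearMap.ker φ).subtype).prodMap ((LinearMap.ker ψ).subtype)).codRestrict _
      (fun z => by
        rw [LinearMap.mem_ker]
        show (φ z.1.1, ψ z.2.1) = 0
        rw [Prod.ext_iff]
        exact ⟨z.1.2, z.2.2⟩))
    (by
      constructor
      · intro a b hab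
        have h2 := Subtype.ext_iff.mp hab
        have h3 : ((a.1.1 : M), (a.2.1 : M')) = (b.1.1, b.2.1) := h2
        rw [Prod.ext_iff] at h3 ⊢
        exact ⟨Subtype.ext h3.1, Subtype.ext h3.2⟩
      · intro z
        obtain ⟨x, hx⟩ := z
        have hx1 : φ x.1 = 0 := congrArg Prod.fst (LinearMap.mem_ker.mp hx)
        have hx2 : ψ x.2 = 0 := congrArg Prod.snd (LinearMap.mem_ker.mp hx)
        refine ⟨(⟨x.1, hx1⟩, ⟨x.2, hx2⟩), ?_⟩
        apply Subtype.ext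
        show ((x.1 : M), (x.2 : M')) = x
        rfl)

lemma gp_prod_proj {G Q : ModuleCat.{u} A} (hG : IsGorensteinProjective G) (hQ : Projective Q) :
    IsGorensteinProjective (ModuleCat.of A (↑G × ↑Q)) := by
  obtain ⟨P, hP, j, ⟨e⟩⟩ := hG
  refine ⟨prodComplex P (constComplex Q),
    prodComplex_totAcyclic hP (constComplex_totAcyclic hQ), j, ⟨?_⟩⟩
  have e1 : (↑G : Type u) ≃ₗ[A] LinearMap.ker (P.d j (j-1)).hom :=
    (e.trans (cyclesKerIso P j)).toLinearEquiv
  have e2 := constComplexCyclesEquiv Q j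
  exact ((e1.prodCongr e2).trans (kerProdEquiv _ _)).toModuleIso.trans
    (cyclesKerIso (prodComplex P (constComplex Q)) j).symm

end GPaux
namespace GPaux

open CategoryTheory CategoryTheory.Limits

variable {A : Type u} [Ring A]

/-! ### countable powers -/

section maprange

variable {M N R : Type u} [AddCommGroup M] [AddCommGroup N] [AddCommGroup R]
  [Module A M] [Module A N] [Module A R]

lemma mapRangeL_apply (f : M →ₗ[A] N) (x : Π₀ _ : ℕ, M) (i : ℕ) :
    DFinsupp.mapRange.linearMap (fun _ : ℕ => f) x i = f (x i) := by
  rfl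

lemma mapRangeL_single (f : M →ₗ[A] N) (i : ℕ) (m : M) :
    DFinsupp.mapRange.linearMap (fun _ : ℕ => f) (DFinsupp.single i m) =
      DFinsupp.single i (f m) := by
  refine DFinsupp.ext fun k => ?_
  rw [mapRangeL_apply]
  classical
  by_cases h : i = k
  · subst h
    rw [DFinsupp.single_eq_same, DFinsupp.single_eq_same]
  · rw [DFinsupp.single_eq_of_ne (Ne.symm h), DFinsupp.single_eq_of_ne (Ne.symm h), map_zero]

lemma mapRangeL_inj (f : M →ₗ[A] N) (hf : Function.Injective f) :
    Function.Injective (DFinsupp.mapRange.linearMap (fun _ : ℕ => f)) := by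
  intro x y h
  refine DFinsupp.ext fun i => ?_
  apply hf
  have := congrArg (fun z => z i) h
  simpa only [mapRangeL_apply] using this

lemma mapRangeL_pre (f : M →ₗ[A] N) (Y : Π₀ _ : ℕ, N) (c : ∀ i : ℕ, {m : M // f m = Y i}) :
    ∃ X, DFinsupp.mapRange.linearMap (fun _ : ℕ => f) X = Y := by
  classical
  refine ⟨Y.sum (fun i _ => DFinsupp.single i (c i).1), ?_⟩
  have h1 : DFinsupp.mapRange.linearMap (fun _ : ℕ => f)
        (Y.sum fun i _ => DFinsupp.single i (c i).1)
      = Y.sum fun i n => DFinsupp.single i n := by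
    refine (map_sum _ _ _).trans ?_
    refine Finset.sum_congr rfl (fun i _ => ?_)
    rw [mapRangeL_single, (c i).2]
  rw [h1]
  exact DFinsupp.sum_single

lemma mapRangeL_surj (f : M →ₗ[A] N) (hf : Function.Surjective f) :
    Function.Surjective (DFinsupp.mapRange.linearMap (fun _ : ℕ => f)) := by
  intro Y
  exact mapRangeL_pre f Y (fun i => ⟨Classical.choose (hf (Y i)), Classical.choose_spec (hf (Y i))⟩)

lemma mapRangeL_exact (f : M →ₗ[A] N) (g : N →ₗ[A] R)
    (hex : ∀ y, g y = 0 ↔ ∃ x, f x = y) :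
    ∀ Y, DFinsupp.mapRange.linearMap (fun _ : ℕ => g) Y = 0 ↔
      ∃ X, DFinsupp.mapRange.linearMap (fun _ : ℕ => f) X = Y := by
  intro Y
  constructor
  · intro hY
    have hcomp : ∀ i : ℕ, g (Y i) = 0 := by
      intro i
      have := congrArg (fun z => z i) hY
      simpa only [mapRangeL_apply, DFinsupp.zero_apply] using this
    exact mapRangeL_pre f Y (fun i => ⟨Classical.choose ((hex (Y i)).mp (hcomp i)),
      Classical.choose_spec ((hex (Y i)).mp (hcomp i))⟩)
  · rintro ⟨X, rfl⟩
    refine DFinsupp.ext fun i => ?_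
    rw [mapRangeL_apply, mapRangeL_apply]
    exact (hex (f (X i))).mpr ⟨X i, rfl⟩

noncomputable def powKerEquiv (φ : M →ₗ[A] N) :
    (Π₀ _ : ℕ, LinearMap.ker φ) ≃ₗ[A]
      LinearMap.ker (DFinsupp.mapRange.linearMap (fun _ : ℕ => φ)) :=
  LinearEquiv.ofBijective
    ((DFinsupp.mapRange.linearMap (fun _ : ℕ => (LinearMap.ker φ).subtype)).codRestrict _
      (fun z => by
        rw [LinearMap.mem_ker]
        refine DFinsupp.ext fun i => ?_
        rw [mapRangeL_apply, mapRangeL_apply]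
        exact (z i).2))
    (by
      constructor
      · intro a b hab
        have h2 := Subtype.ext_iff.mp hab
        refine DFinsupp.ext fun i => ?_
        apply Subtype.ext
        have := congrArg (fun z => z i) h2
        simpa only [mapRangeL_apply, LinearMap.codRestrict_apply, Submodule.subtype_apply] using this
      · intro z
        obtain ⟨x, hx⟩ := z
        have hker : ∀ i : ℕ, φ (x i) = 0 := by
          intro i
          have := congrArg (fun w => w i) (LinearMap.mem_ker.mp hx)
          simpa only [mapRangeL_apply, DFinsupp.zero_apply] using this
        classical
        refine ⟨x.sum (fun i _ => DFinsupp.single i (⟨x i, hker i⟩ : LinearMap.ker φ)), ?_⟩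
        apply Subtype.ext
        show DFinsupp.mapRange.linearMap (fun _ : ℕ => (LinearMap.ker φ).subtype) _ = x
        refine ((map_sum _ _ _).trans ?_)
        refine (Finset.sum_congr rfl (fun i _ => ?_)).trans DFinsupp.sum_single
        rw [mapRangeL_single]
        rfl)

end maprange

def Pow (M : ModuleCat.{u} A) : ModuleCat.{u} A := ModuleCat.of A (Π₀ _ : ℕ, ↑M)

noncomputable def powComplex (P : ChainComplex (ModuleCat.{u} A) ℤ) :
    ChainComplex (ModuleCat.{u} A) ℤ where
  X n := ModuleCat.of A (Π₀ _ : ℕ, ↑(P.X n))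
  d i j := ModuleCat.ofHom (DFinsupp.mapRange.linearMap (fun _ : ℕ => (P.d i j).hom))
  shape i j h := by
    refine ModuleCat.hom_ext (LinearMap.ext fun x => ?_)
    refine DFinsupp.ext fun i' => ?_
    rw [ModuleCat.hom_ofHom, mapRangeL_apply]
    rw [P.shape i j h]
    rfl
  d_comp_d' i j k _ _ := by
    refine ModuleCat.hom_ext (DFinsupp.lhom_ext fun i' m => ?_)
    show DFinsupp.mapRange.linearMap (fun _ : ℕ => (P.d j k).hom)
      (DFinsupp.mapRange.linearMap (fun _ : ℕ => (P.d i j).hom)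
        (DFinsupp.single i' m)) = 0
    rw [mapRangeL_single, mapRangeL_single]
    have hdd : P.d j k (P.d i j m) = 0 := ConcreteCategory.congr_hom (P.d_comp_d i j k) m
    rw [hdd, DFinsupp.single_zero]

lemma powComplex_totAcyclic {P : ChainComplex (ModuleCat.{u} A) ℤ}
    (h : IsTotallyAcyclicProjComplex (ModuleCat.{u} A) P) :
    IsTotallyAcyclicProjComplex (ModuleCat.{u} A) (powComplex P) := by
  obtain ⟨hproj, hex, hlift⟩ := h
  refine ⟨fun n => ?_, fun n => ?_, fun R hR n f hf => ?_⟩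
  · have i1 := ofProj _ (hproj n)
    exact projOf (M := Π₀ _ : ℕ, ↑(P.X n)) inferInstance
  · apply exact_mk
    intro (x : Π₀ _ : ℕ, ↑(P.X n)) hx
    have hiff : ∀ y : ↑(P.X n), P.d n (n-1) y = 0 ↔ ∃ w, P.d (n+1) n w = y := by
      intro y
      constructor
      · exact exact_concrete (hex n) y
      · rintro ⟨w, rfl⟩
        exact ConcreteCategory.congr_hom (P.d_comp_d (n+1) n (n-1)) w
    exact (mapRangeL_exact _ _ hiff x).mp hx
  · -- lifting property
    have key : ∀ i : ℕ, ∃ g : P.X (n-1) ⟶ R,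
        P.d n (n-1) ≫ g = ModuleCat.ofHom (f.hom.comp (DFinsupp.lsingle (M := fun _ : ℕ => ↑(P.X n)) i)) := by
      intro i
      apply hlift R hR n
      refine ModuleCat.hom_ext (LinearMap.ext fun x => ?_)
      show f (DFinsupp.single i (P.d (n+1) n x)) = 0
      rw [← mapRangeL_single]
      exact ConcreteCategory.congr_hom hf (DFinsupp.single i x)
    choose g hg using key
    refine ⟨ModuleCat.ofHom (DFinsupp.lsum ℕ (fun i => (g i).hom)), ?_⟩
    refine ModuleCat.hom_ext (DFinsupp.lhom_ext fun i m => ?_)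
    show DFinsupp.lsum ℕ (fun i => (g i).hom)
        (DFinsupp.mapRange.linearMap (fun _ : ℕ => (P.d n (n-1)).hom)
          (DFinsupp.single i m)) = f (DFinsupp.single i m)
    rw [mapRangeL_single]
    have h2 : DFinsupp.lsum ℕ (fun i => (g i).hom)
        (DFinsupp.single i (P.d n (n-1) m)) = g i (P.d n (n-1) m) := by simp
    rw [h2]
    exact ConcreteCategory.congr_hom (hg i) m

lemma gp_pow {G : ModuleCat.{u} A} (hG : IsGorensteinProjective G) :
    IsGorensteinProjective (Pow G) := by
  obtain ⟨P, hP, j, ⟨e⟩⟩ := hG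
  refine ⟨powComplex P, powComplex_totAcyclic hP, j, ⟨?_⟩⟩
  have e1 : (↑G : Type u) ≃ₗ[A] LinearMap.ker (P.d j (j-1)).hom :=
    (e.trans (cyclesKerIso P j)).toLinearEquiv
  exact ((DFinsupp.mapRange.linearEquiv (fun _ : ℕ => e1)).trans
    (powKerEquiv _)).toModuleIso.trans (cyclesKerIso (powComplex P) j).symm

noncomputable def powMap {X Y : ModuleCat.{u} A} (f : X ⟶ Y) : Pow X ⟶ Pow Y :=
  ModuleCat.ofHom (DFinsupp.mapRange.linearMap (fun _ : ℕ => f.hom))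

lemma ses_pow {X Y Z : ModuleCat.{u} A} {f : X ⟶ Y} {g : Y ⟶ Z} (h : IsShortExactSeq f g) :
    IsShortExactSeq (powMap f) (powMap g) :=
  ses_mk _ _ (mapRangeL_inj _ (ses_inj h)) (mapRangeL_surj _ (ses_surj h))
    (mapRangeL_exact _ _ (ses_exact h))

lemma gpd_pow {n : ℕ} {G : ModuleCat.{u} A} (h : gpdLE n G) : gpdLE n (Pow G) := by
  induction n generalizing G with
  | zero => exact gp_pow h
  | succ n ih =>
    obtain ⟨K, G0, f, g, hses, hG0, hK⟩ := h
    exact ⟨Pow K, Pow G0, _, _, ses_pow hses, gp_pow hG0, ih hK⟩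

end GPaux
namespace GPaux

open CategoryTheory CategoryTheory.Limits

variable {A : Type u} [Ring A]

noncomputable def cyclesKerIso' (P : ChainComplex (ModuleCat.{u} A) ℤ) (j k : ℤ)
    (hk : j - 1 = k) : P.cycles j ≅ ModuleCat.of A (LinearMap.ker (P.d j k).hom) := by
  subst hk
  exact cyclesKerIso P j

lemma exact_concrete' {P : ChainComplex (ModuleCat.{u} A) ℤ} {n m p : ℤ} (h : P.ExactAt n)
    (hm : n - 1 = m) (hp : n + 1 = p) :
    ∀ x : P.X n, P.d n m x = 0 → ∃ y : P.X p, P.d p n y = x := by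
  subst hm hp
  exact exact_concrete h

/-- Every Gorenstein projective is a quotient of a projective with Gorenstein projective
kernel. -/
lemma gp_syzygy {G : ModuleCat.{u} A} (hG : IsGorensteinProjective G) :
    ∃ (S Q : ModuleCat.{u} A) (f : S ⟶ Q) (g : Q ⟶ G),
      IsShortExactSeq f g ∧ IsGorensteinProjective S ∧ Projective Q := by
  obtain ⟨P, hP, j, ⟨e⟩⟩ := hG
  obtain ⟨hproj, hex, hlift⟩ := hP
  set S : ModuleCat.{u} A := ModuleCat.of A (LinearMap.ker (P.d (j+1) j).hom) with hS
  set G' : ModuleCat.{u} A := ModuleCat.of A (LinearMap.ker (P.d j (j-1)).hom) with hG'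
  have hmem : ∀ x : ↑(P.X (j+1)), P.d (j+1) j x ∈ LinearMap.ker (P.d j (j-1)).hom := by
    intro x
    rw [LinearMap.mem_ker]
    exact ConcreteCategory.congr_hom (P.d_comp_d (j+1) j (j-1)) x
  set gQ : P.X (j+1) ⟶ G' :=
    ModuleCat.ofHom (LinearMap.codRestrict (LinearMap.ker (P.d j (j-1)).hom) (P.d (j+1) j).hom hmem) with hgQ
  have eiso : G' ≅ G := ((cyclesKerIso P j).symm).trans e.symm
  refine ⟨S, P.X (j+1), ModuleCat.ofHom (LinearMap.ker (P.d (j+1) j).hom).subtype, gQ ≫ eiso.hom, ?_, ?_, hproj (j+1)⟩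
  · refine ses_mk _ _ (fun a b hab => Subtype.ext hab) ?_ ?_
    · -- surjectivity
      have hsurj : Function.Surjective gQ := by
        intro z
        obtain ⟨y, hy⟩ := exact_concrete' (hex j) rfl rfl z.1 (LinearMap.mem_ker.mp z.2)
        exact ⟨y, Subtype.ext hy⟩
      intro y
      obtain ⟨y', hy'⟩ := eiso.toLinearEquiv.surjective y
      obtain ⟨w, hw⟩ := hsurj y'
      exact ⟨w, by show eiso.hom (gQ w) = y; rw [hw]; exact hy'⟩
    · intro y
      have h1 : (gQ ≫ eiso.hom) y = eiso.hom (gQ y) := rfl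
      rw [h1]
      constructor
      · intro hy
        have h2 : gQ y = 0 := eiso.toLinearEquiv.injective (by
          show eiso.hom (gQ y) = eiso.toLinearEquiv 0
          rw [hy, map_zero])
        have h3 : P.d (j+1) j y = 0 := Subtype.ext_iff.mp h2
        exact ⟨⟨y, h3⟩, rfl⟩
      · rintro ⟨x, rfl⟩
        obtain ⟨x, hxmem⟩ := x
        have h2 : gQ x = 0 := Subtype.ext hxmem
        show eiso.hom (gQ x) = 0
        rw [h2, map_zero]
  · exact ⟨P, ⟨hproj, hex, hlift⟩, j+1, ⟨(cyclesKerIso' P (j+1) j (by ring)).symm⟩⟩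

/-- Pullback of a short exact sequence along an epimorphism appearing in another short
exact sequence. -/
lemma pullback_ses {X Y Z S Q : ModuleCat.{u} A} (f : X ⟶ Y) (g : Y ⟶ Z) (s : S ⟶ Q)
    (q : Q ⟶ Z) (h1 : IsShortExactSeq f g) (h2 : IsShortExactSeq s q) :
    ∃ (E : ModuleCat.{u} A) (sE : S ⟶ E) (pE : E ⟶ Y) (xE : X ⟶ E) (qE : E ⟶ Q),
      IsShortExactSeq sE pE ∧ IsShortExactSeq xE qE := by
  set φ : ModuleCat.of A (↑Y × ↑Q) ⟶ Z :=
    ModuleCat.ofHom (g.hom.comp (LinearMap.fst A ↑Y ↑Q) -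
      q.hom.comp (LinearMap.snd A ↑Y ↑Q)) with hφ
  have hmemiff : ∀ w : ↑Y × ↑Q, w ∈ LinearMap.ker φ.hom ↔ g w.1 = q w.2 := by
    intro w
    rw [LinearMap.mem_ker]
    show g w.1 - q w.2 = 0 ↔ _
    exact sub_eq_zero
  refine ⟨ModuleCat.of A (LinearMap.ker φ.hom),
    ModuleCat.ofHom (LinearMap.codRestrict _ (LinearMap.prod (0 : ↑S →ₗ[A] ↑Y) s.hom)
      (fun c => (hmemiff _).mpr (by
        show g 0 = q (s c)
        rw [map_zero, ses_comp_zero h2 c]))),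
    ModuleCat.ofHom ((LinearMap.fst A ↑Y ↑Q).comp (LinearMap.ker φ.hom).subtype),
    ModuleCat.ofHom (LinearMap.codRestrict _ (LinearMap.prod f.hom (0 : ↑X →ₗ[A] ↑Q))
      (fun x => (hmemiff _).mpr (by
        show g (f x) = q 0
        rw [map_zero, ses_comp_zero h1 x]))),
    ModuleCat.ofHom ((LinearMap.snd A ↑Y ↑Q).comp (LinearMap.ker φ.hom).subtype), ?_, ?_⟩
  · refine ses_mk _ _ ?_ ?_ ?_
    · intro a b hab
      have h3 := congrArg Prod.snd (Subtype.ext_iff.mp hab)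
      exact ses_inj h2 h3
    · intro y
      obtain ⟨p, hp⟩ := ses_surj h2 (g y)
      exact ⟨⟨(y, p), (hmemiff _).mpr hp.symm⟩, rfl⟩
    · intro w
      obtain ⟨w, hwmem⟩ := w
      constructor
      · intro hw
        have h1' : w.1 = 0 := hw
        have h2' : q w.2 = 0 := by
          have h3' := (hmemiff w).mp hwmem
          rw [← h3', h1', map_zero]
        obtain ⟨c, hc⟩ := (ses_exact h2 _).mp h2'
        refine ⟨c, Subtype.ext ?_⟩
        show ((0 : ↑Y), s c) = w
        rw [Prod.ext_iff]
        exact ⟨h1'.symm, hc⟩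
      · rintro ⟨c, hc⟩
        rw [← hc]
        rfl
  · refine ses_mk _ _ ?_ ?_ ?_
    · intro a b hab
      have h3 := congrArg Prod.fst (Subtype.ext_iff.mp hab)
      exact ses_inj h1 h3
    · intro p
      obtain ⟨y, hy⟩ := ses_surj h1 (q p)
      exact ⟨⟨(y, p), (hmemiff _).mpr hy⟩, rfl⟩
    · intro w
      obtain ⟨w, hwmem⟩ := w
      constructor
      · intro hw
        have h1' : w.2 = 0 := hw
        have h2' : g w.1 = 0 := by
          have h3' := (hmemiff w).mp hwmem
          rw [h3', h1', map_zero]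
        obtain ⟨x, hx⟩ := (ses_exact h1 _).mp h2'
        refine ⟨x, Subtype.ext ?_⟩
        show ((f x : ↑Y), (0 : ↑Q)) = w
        rw [Prod.ext_iff]
        exact ⟨hx, h1'.symm⟩
      · rintro ⟨x, hx⟩
        rw [← hx]
        rfl

/-- A short exact sequence with projective quotient splits. -/
lemma split_iso {X E Q : ModuleCat.{u} A} (f : X ⟶ E) (p : E ⟶ Q)
    (h : IsShortExactSeq f p) (hQ : Projective Q) :
    Nonempty (ModuleCat.of A (↑X × ↑Q) ≅ E) := by
  haveI := hQ
  haveI : Epi p := (ModuleCat.epi_iff_surjective p).mpr (ses_surj h)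
  set σ : Q ⟶ E := Projective.factorThru (𝟙 Q) p with hσdef
  have hσ : ∀ z, p (σ z) = z := fun z =>
    ConcreteCategory.congr_hom (Projective.factorThru_comp (𝟙 Q) p) z
  set m : ModuleCat.of A (↑X × ↑Q) ⟶ E :=
    ModuleCat.ofHom (f.hom.comp (LinearMap.fst A ↑X ↑Q) +
      σ.hom.comp (LinearMap.snd A ↑X ↑Q)) with hm
  have happ : ∀ w : ↑X × ↑Q, m w = f w.1 + σ w.2 := fun w => rfl
  have hbij : Function.Bijective m := by
    constructor
    · intro a b hab
      have h1 : f a.1 + σ a.2 = f b.1 + σ b.2 := by rw [← happ, ← happ, hab]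
      have h2 : a.2 = b.2 := by
        have := congrArg p h1
        rw [map_add, map_add, hσ, hσ, ses_comp_zero h, ses_comp_zero h, zero_add, zero_add] at this
        exact this
      have h3 : f a.1 = f b.1 := by
        rw [h2] at h1
        exact add_right_cancel h1
      have h4 := ses_inj h h3
      rw [Prod.ext_iff]
      exact ⟨h4, h2⟩
    · intro e
      have h5 : p (e - σ (p e)) = 0 := by
        rw [map_sub, hσ, sub_self]
      obtain ⟨x, hx⟩ := (ses_exact h _).mp h5
      refine ⟨(x, p e), ?_⟩
      rw [happ, hx]
      show e - σ (p e) + σ (p e) = e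
      rw [sub_add_cancel]
  exact ⟨(LinearEquiv.ofBijective m.hom hbij).toModuleIso⟩

/-- Given a SES `K → G → E` and a SES `S → E → Y`, the kernel `T` of the composite
`G → E → Y` sits in SESs `K → T → S` and `T → G → Y`. -/
lemma mid_ses {K G E S Y : ModuleCat.{u} A} (k : K ⟶ G) (p : G ⟶ E) (s : S ⟶ E) (t : E ⟶ Y)
    (h1 : IsShortExactSeq k p) (h2 : IsShortExactSeq s t) :
    ∃ (T : ModuleCat.{u} A) (a : K ⟶ T) (b : T ⟶ S) (c : T ⟶ G),
      IsShortExactSeq a b ∧ IsShortExactSeq c (p ≫ t) := by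
  set u : ↑G →ₗ[A] ↑Y := t.hom.comp p.hom with hu
  have huapp : ∀ w : ↑G, (p ≫ t) w = u w := fun _ => rfl
  set eS := LinearEquiv.ofInjective s.hom (ses_inj h2) with heS
  have heSapp : ∀ c : ↑S, (eS c : ↑E) = s c := fun _ => rfl
  have hbmem : ∀ w : LinearMap.ker u, p (w : ↑G) ∈ LinearMap.range s.hom := by
    intro w
    have h3 : t (p (w : ↑G)) = 0 := LinearMap.mem_ker.mp w.2
    obtain ⟨c, hc⟩ := (ses_exact h2 _).mp h3
    exact ⟨c, hc⟩
  set b : ModuleCat.of A (LinearMap.ker u) ⟶ S :=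
    ModuleCat.ofHom ((eS.symm : LinearMap.range s.hom →ₗ[A] ↑S).comp
      (LinearMap.codRestrict _ (p.hom.comp (LinearMap.ker u).subtype) hbmem))
    with hb
  have hbapp : ∀ w : LinearMap.ker u, s (b w) = p (w : ↑G) := by
    intro w
    have := heSapp (eS.symm ⟨p (w : ↑G), hbmem w⟩)
    rw [LinearEquiv.apply_symm_apply] at this
    exact this.symm
  have hamem : ∀ x : ↑K, k x ∈ LinearMap.ker u := by
    intro x
    rw [LinearMap.mem_ker]
    show t (p (k x)) = 0
    rw [ses_comp_zero h1, map_zero]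
  refine ⟨ModuleCat.of A (LinearMap.ker u),
    ModuleCat.ofHom (LinearMap.codRestrict _ k.hom hamem), b,
    ModuleCat.ofHom (LinearMap.ker u).subtype, ?_, ?_⟩
  · refine ses_mk _ _ ?_ ?_ ?_
    · intro a1 a2 ha
      exact ses_inj h1 (Subtype.ext_iff.mp ha)
    · intro σ
      obtain ⟨g, hg⟩ := ses_surj h1 (s σ)
      have hgmem : g ∈ LinearMap.ker u := by
        rw [LinearMap.mem_ker]
        show t (p g) = 0
        rw [hg, ses_comp_zero h2]
      refine ⟨⟨g, hgmem⟩, ?_⟩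
      apply ses_inj h2
      rw [hbapp ⟨g, hgmem⟩]
      exact hg
    · intro w
      obtain ⟨w, hwmem⟩ := w
      constructor
      · intro hw
        have h3 : p w = 0 := by
          have h4 := hbapp ⟨w, hwmem⟩
          rw [hw, map_zero] at h4
          exact h4.symm
        obtain ⟨x, hx⟩ := (ses_exact h1 _).mp h3
        exact ⟨x, Subtype.ext hx⟩
      · rintro ⟨x, hx⟩
        rw [← hx]
        apply ses_inj h2
        rw [hbapp]
        show p (k x) = s 0
        rw [ses_comp_zero h1 x, map_zero]
  · refine ses_mk _ _ (fun a1 a2 ha => Subtype.ext ha) ?_ ?_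
    · intro y
      obtain ⟨e, he⟩ := ses_surj h2 y
      obtain ⟨g, hg⟩ := ses_surj h1 e
      exact ⟨g, by rw [huapp]; show t (p g) = y; rw [hg, he]⟩
    · intro w
      rw [huapp]
      constructor
      · intro hw
        exact ⟨⟨w, LinearMap.mem_ker.mpr hw⟩, rfl⟩
      · rintro ⟨x, rfl⟩
        exact LinearMap.mem_ker.mp x.2

end GPaux
namespace GPaux

open CategoryTheory CategoryTheory.Limits

variable {A : Type u} [Ring A]

def inrHom (X Q : ModuleCat.{u} A) : Q ⟶ ModuleCat.of A (↑X × ↑Q) := ModuleCat.ofHom (LinearMap.inr A ↑X ↑Q)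

def fstHom (X Q : ModuleCat.{u} A) : ModuleCat.of A (↑X × ↑Q) ⟶ X := ModuleCat.ofHom (LinearMap.fst A ↑X ↑Q)

def inlHom (X Q : ModuleCat.{u} A) : X ⟶ ModuleCat.of A (↑X × ↑Q) := ModuleCat.ofHom (LinearMap.inl A ↑X ↑Q)

def prodMapIdHom {G X : ModuleCat.{u} A} (g : G ⟶ X) (Q : ModuleCat.{u} A) :
    ModuleCat.of A (↑G × ↑Q) ⟶ ModuleCat.of A (↑X × ↑Q) :=
  ModuleCat.ofHom (g.hom.prodMap (LinearMap.id : ↑Q →ₗ[A] ↑Q))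

lemma ses_inr_fst (X Q : ModuleCat.{u} A) : IsShortExactSeq (inrHom X Q) (fstHom X Q) := by
  refine ses_mk _ _ ?_ ?_ ?_
  · intro a b hab
    exact congrArg Prod.snd hab
  · intro x
    exact ⟨(x, 0), rfl⟩
  · intro w
    constructor
    · intro hw
      refine ⟨w.2, ?_⟩
      show ((0 : ↑X), w.2) = w
      rw [Prod.ext_iff]
      exact ⟨(by exact hw : w.1 = 0).symm, rfl⟩
    · rintro ⟨c, rfl⟩
      rfl

lemma ses_prodMapId {K G X : ModuleCat.{u} A} {f : K ⟶ G} {g : G ⟶ X}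
    (h : IsShortExactSeq f g) (Q : ModuleCat.{u} A) :
    IsShortExactSeq (f ≫ inlHom G Q) (prodMapIdHom g Q) := by
  refine ses_mk _ _ ?_ ?_ ?_
  · intro a b hab
    have := congrArg Prod.fst hab
    exact ses_inj h this
  · intro w
    obtain ⟨a, ha⟩ := ses_surj h w.1
    refine ⟨(a, w.2), ?_⟩
    show (g a, w.2) = w
    rw [Prod.ext_iff]
    exact ⟨ha, rfl⟩
  · intro w
    constructor
    · intro hw
      have h1 : g w.1 = 0 := congrArg Prod.fst hw
      have h2 : w.2 = 0 := congrArg Prod.snd hw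
      obtain ⟨x, hx⟩ := (ses_exact h _).mp h1
      refine ⟨x, ?_⟩
      show ((f x : ↑G), (0 : ↑Q)) = w
      rw [Prod.ext_iff]
      exact ⟨hx, h2.symm⟩
    · rintro ⟨x, rfl⟩
      show (g (f x), (0 : ↑Q)) = 0
      rw [ses_comp_zero h x]
      rfl

lemma gpd_prod_proj {n : ℕ} {X Q : ModuleCat.{u} A} (h : gpdLE n X) (hQ : Projective Q) :
    gpdLE n (ModuleCat.of A (↑X × ↑Q)) := by
  induction n generalizing X with
  | zero => exact gp_prod_proj h hQ
  | succ n ih =>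
    obtain ⟨K, G, f, g, hses, hG, hK⟩ := h
    exact ⟨K, ModuleCat.of A (↑G × ↑Q), f ≫ inlHom G Q, prodMapIdHom g Q,
      ses_prodMapId hses Q, gp_prod_proj hG hQ, hK⟩

/-! ### the induction engine -/

lemma coker_extGP : ∀ k : ℕ,
    (∀ {S E Y₀ : ModuleCat.{u} A} (a : S ⟶ E) (b : E ⟶ Y₀), IsShortExactSeq a b →
      IsGorensteinProjective S → gpdLE k E → gpdLE (k+1) Y₀) ∧
    (∀ {X Y₀ Z : ModuleCat.{u} A} (f : X ⟶ Y₀) (g : Y₀ ⟶ Z), IsShortExactSeq f g →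
      gpdLE k X → IsGorensteinProjective Z → gpdLE (k+1) Y₀) := by
  intro k
  induction k with
  | zero =>
    constructor
    · intro S E Y a b hses hS hE
      exact ⟨S, E, a, b, hses, hE, hS⟩
    · intro X Y Z f g hses hX hZ
      obtain ⟨S, Q, sf, sq, hsq, hSgp, hQproj⟩ := gp_syzygy hZ
      obtain ⟨E, sE, pE, xE, qE, h1, h2⟩ := pullback_ses f g sf sq hses hsq
      obtain ⟨iso⟩ := split_iso xE qE h2 hQproj
      have hEgp : IsGorensteinProjective E := gp_of_iso iso.symm (gp_prod_proj hX hQproj)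
      exact ⟨S, E, sE, pE, h1, hEgp, hSgp⟩
  | succ k ih =>
    have coker : ∀ {S E Y₀ : ModuleCat.{u} A} (a : S ⟶ E) (b : E ⟶ Y₀), IsShortExactSeq a b →
        IsGorensteinProjective S → gpdLE (k+1) E → gpdLE (k+2) Y₀ := by
      intro S E Y a b hses hS hE
      obtain ⟨KE, GE, kf, kg, hses2, hGE, hKE⟩ := hE
      obtain ⟨T, aT, bT, cT, hT1, hT2⟩ := mid_ses kf kg a b hses2 hses
      have hT : gpdLE (k+1) T := ih.2 aT bT hT1 hKE hS
      exact ⟨T, GE, cT, _, hT2, hGE, hT⟩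
    refine ⟨coker, ?_⟩
    intro X Y Z f g hses hX hZ
    obtain ⟨S, Q, sf, sq, hsq, hSgp, hQproj⟩ := gp_syzygy hZ
    obtain ⟨E, sE, pE, xE, qE, h1, h2⟩ := pullback_ses f g sf sq hses hsq
    obtain ⟨iso⟩ := split_iso xE qE h2 hQproj
    have hE : gpdLE (k+1) E := gpd_of_iso iso (gpd_prod_proj hX hQproj)
    exact coker sE pE h1 hSgp hE

lemma D_and_C : ∀ s : ℕ,
    (∀ (a : ℕ) {X Y Z : ModuleCat.{u} A} (f : X ⟶ Y) (g : Y ⟶ Z), IsShortExactSeq f g →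
      gpdLE a X → gpdLE s Z → ∃ m, gpdLE m Y) ∧
    (∀ (e : ℕ) {S E Y : ModuleCat.{u} A} (f : S ⟶ E) (g : E ⟶ Y), IsShortExactSeq f g →
      gpdLE s S → gpdLE e E → ∃ m, gpdLE m Y) := by
  intro s
  induction s with
  | zero =>
    constructor
    · intro a X Y Z f g hses hX hZ
      exact ⟨a+1, (coker_extGP a).2 f g hses hX hZ⟩
    · intro e S E Y f g hses hS hE
      exact ⟨e+1, (coker_extGP e).1 f g hses hS hE⟩
  | succ s ih =>
    have D : ∀ (a : ℕ) {X Y Z : ModuleCat.{u} A} (f : X ⟶ Y) (g : Y ⟶ Z), IsShortExactSeq f g →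
        gpdLE a X → gpdLE (s+1) Z → ∃ m, gpdLE m Y := by
      intro a X Y Z f g hses hX hZ
      obtain ⟨KZ, GZ, kf, kg, hses2, hGZ, hKZ⟩ := hZ
      obtain ⟨E, sE, pE, xE, qE, h1, h2⟩ := pullback_ses f g kf kg hses hses2
      have hE : gpdLE (a+1) E := (coker_extGP a).2 xE qE h2 hX hGZ
      exact ih.2 (a+1) sE pE h1 hKZ hE
    refine ⟨D, ?_⟩
    intro e S E Y f g hses hS hE
    cases e with
    | zero => exact ⟨s+2, ⟨S, E, f, g, hses, hE, hS⟩⟩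
    | succ e =>
      obtain ⟨KE, GE, kf, kg, hses2, hGE, hKE⟩ := hE
      obtain ⟨T, aT, bT, cT, hT1, hT2⟩ := mid_ses kf kg f g hses2 hses
      obtain ⟨m, hm⟩ := D e aT bT hT1 hKE hS
      exact ⟨m+1, ⟨T, GE, cT, _, hT2, hGE, hm⟩⟩

lemma kerGP0 {M B Cc : ModuleCat.{u} A} (f : M ⟶ B) (g : B ⟶ Cc) (hses : IsShortExactSeq f g)
    (hB : IsGorensteinProjective B) (hC : IsGorensteinProjective Cc) : gpdLE 1 M := by
  obtain ⟨S, Q, sf, sq, hsq, hSgp, hQproj⟩ := gp_syzygy hC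
  obtain ⟨E, sE, pE, xE, qE, h1, h2⟩ := pullback_ses f g sf sq hses hsq
  obtain ⟨iso⟩ := split_iso xE qE h2 hQproj
  have hE1 : gpdLE 1 E := (coker_extGP 0).2 sE pE h1 hSgp hB
  have hMQ : gpdLE 1 (ModuleCat.of A (↑M × ↑Q)) := gpd_of_iso iso.symm hE1
  obtain ⟨K, G0, kf, kg, hses2, hG0, hK⟩ := hMQ
  obtain ⟨T, aT, bT, cT, hT1, hT2⟩ := mid_ses kf kg (inrHom M Q) (fstHom M Q) hses2
    (ses_inr_fst M Q)
  obtain ⟨isoT⟩ := split_iso aT bT hT1 hQproj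
  have hTgp : IsGorensteinProjective T := gp_of_iso isoT.symm (gp_prod_proj hK hQproj)
  exact ⟨T, G0, cT, _, hT2, hG0, hTgp⟩

lemma kerGP : ∀ (b : ℕ) {M B Cc : ModuleCat.{u} A} (f : M ⟶ B) (g : B ⟶ Cc),
    IsShortExactSeq f g → gpdLE b B → IsGorensteinProjective Cc → ∃ m, gpdLE m M := by
  intro b M B Cc f g hses hB hC
  cases b with
  | zero => exact ⟨1, kerGP0 f g hses hB hC⟩
  | succ b =>
    obtain ⟨KB, GB, kf, kg, hses2, hGB, hKB⟩ := hB
    obtain ⟨T, aT, bT, cT, hT1, hT2⟩ := mid_ses kf kg f g hses2 hses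
    have hT : gpdLE 1 T := kerGP0 cT _ hT2 hGB hC
    exact (D_and_C b).2 1 aT bT hT1 hKB hT

lemma ker_gen : ∀ (b c : ℕ) {M B Cc : ModuleCat.{u} A} (f : M ⟶ B) (g : B ⟶ Cc),
    IsShortExactSeq f g → gpdLE b B → gpdLE c Cc → ∃ m, gpdLE m M := by
  intro b c M B Cc f g hses hB hC
  cases c with
  | zero => exact kerGP b f g hses hB hC
  | succ c =>
    obtain ⟨KC, GC, kf, kg, hses2, hGC, hKC⟩ := hC
    obtain ⟨E, sE, pE, xE, qE, h1, h2⟩ := pullback_ses f g kf kg hses hses2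
    obtain ⟨m, hm⟩ := (D_and_C b).1 c sE pE h1 hKC hB
    exact kerGP m xE qE h2 hm hGC

end GPaux
namespace GPaux

open CategoryTheory CategoryTheory.Limits

variable {A : Type u} [Ring A]

lemma summand {M G : ModuleCat.{u} A} (s : M ⟶ G) (r : G ⟶ M) (hsr : s ≫ r = 𝟙 M)
    {n : ℕ} (hG : gpdLE n G) : ∃ m, gpdLE m M := by
  classical
  set σ : ↑G →ₗ[A] ↑G := s.hom.comp r.hom with hσdef
  have hret : ∀ m : ↑M, r (s m) = m := fun m => ConcreteCategory.congr_hom hsr m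
  have hσapp : ∀ x : ↑G, σ x = s (r x) := fun x => rfl
  have hσs : ∀ m : ↑M, σ (s m) = s m := fun m => by rw [hσapp, hret]
  have hσσ : ∀ x : ↑G, σ (σ x) = σ x := fun x => by
    rw [hσapp, hσapp, hret]
  have hrσ : ∀ x : ↑G, r (σ x) = r x := fun x => by rw [hσapp, hret]
  -- the shift-down linear map
  set down : (Π₀ _ : ℕ, ↑G) →ₗ[A] (Π₀ _ : ℕ, ↑G) :=
    { toFun := fun x => DFinsupp.comapDomain Nat.succ (fun _ _ h => Nat.succ_injective h) x
      map_add' := fun a b => DFinsupp.ext fun i => by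
        erw [DFinsupp.comapDomain_apply, DFinsupp.add_apply]
      map_smul' := fun c a => DFinsupp.ext fun i => by
        erw [DFinsupp.comapDomain_apply] } with hdowndef
  have hdown_apply : ∀ (x : Π₀ _ : ℕ, ↑G) (i : ℕ), down x i = x (i+1) := fun x i =>
    DFinsupp.comapDomain_apply Nat.succ (fun _ _ h => Nat.succ_injective h) x i
  have hdown_single0 : ∀ a : ↑G, down (DFinsupp.single 0 a) = 0 := by
    intro a
    refine DFinsupp.ext fun i => ?_
    rw [hdown_apply, DFinsupp.zero_apply, DFinsupp.single_eq_of_ne (Nat.succ_ne_zero i)]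
  have hdown_single_succ : ∀ (j : ℕ) (a : ↑G),
      down (DFinsupp.single (j+1) a) = DFinsupp.single j a := by
    intro j a
    refine DFinsupp.ext fun i => ?_
    rw [hdown_apply]
    by_cases h : j = i
    · subst h
      rw [DFinsupp.single_eq_same, DFinsupp.single_eq_same]
    · rw [DFinsupp.single_eq_of_ne (Ne.symm h), DFinsupp.single_eq_of_ne (fun hh => h (Nat.succ_injective hh.symm))]
  -- the shift-up linear map
  set upL : (Π₀ _ : ℕ, ↑G) →ₗ[A] (Π₀ _ : ℕ, ↑G) :=
    DFinsupp.lsum ℕ (fun i => DFinsupp.lsingle (M := fun _ : ℕ => ↑G) (i+1)) with hupdef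
  have hup_single : ∀ (i : ℕ) (a : ↑G),
      upL (DFinsupp.single i a) = DFinsupp.single (i+1) a := by
    intro i a
    rw [hupdef]
    simp
  set βL : (Π₀ _ : ℕ, ↑G) →ₗ[A] (Π₀ _ : ℕ, ↑G) :=
    DFinsupp.mapRange.linearMap (fun _ : ℕ => LinearMap.id - σ) +
      down.comp (DFinsupp.mapRange.linearMap (fun _ : ℕ => σ)) with hβdef
  have hβapp : ∀ (y : Π₀ _ : ℕ, ↑G) (i : ℕ), βL y i = (y i - σ (y i)) + σ (y (i+1)) := by
    intro y i
    rw [hβdef]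
    rw [LinearMap.add_apply, DFinsupp.add_apply, LinearMap.comp_apply, hdown_apply,
      mapRangeL_apply, mapRangeL_apply, LinearMap.sub_apply, LinearMap.id_apply]
  have hβsingle : ∀ (j : ℕ) (a : ↑G), βL (DFinsupp.single j a) =
      DFinsupp.single j (a - σ a) + down (DFinsupp.single j (σ a)) := by
    intro j a
    rw [hβdef, LinearMap.add_apply, LinearMap.comp_apply, mapRangeL_single, mapRangeL_single]
    rfl
  set ξ : (Π₀ _ : ℕ, ↑G) →ₗ[A] (Π₀ _ : ℕ, ↑G) :=
    DFinsupp.mapRange.linearMap (fun _ : ℕ => LinearMap.id - σ) +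
      upL.comp (DFinsupp.mapRange.linearMap (fun _ : ℕ => σ)) with hξdef
  have hβξ : ∀ y, βL (ξ y) = y := by
    have hext : βL.comp ξ = LinearMap.id := by
      refine DFinsupp.lhom_ext fun i m => ?_
      rw [LinearMap.comp_apply, LinearMap.id_apply]
      have hξs : ξ (DFinsupp.single i m) =
          DFinsupp.single i (m - σ m) + DFinsupp.single (i+1) (σ m) := by
        rw [hξdef, LinearMap.add_apply, LinearMap.comp_apply, mapRangeL_single, mapRangeL_single,
          hup_single]
        rfl
      rw [hξs, map_add, hβsingle, hβsingle]
      have e1 : σ (m - σ m) = 0 := by rw [map_sub, hσσ, sub_self]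
      have e2 : σ (σ m) = σ m := hσσ m
      rw [e1, e2]
      have e3 : (m - σ m) - (0 : ↑G) = m - σ m := sub_zero _
      rw [e3, DFinsupp.single_zero, map_zero, add_zero, sub_self, DFinsupp.single_zero,
        hdown_single_succ, zero_add, ← DFinsupp.single_add, sub_add_cancel]
    intro y
    exact congrFun (congrArg DFunLike.coe hext) y
  set α : M ⟶ Pow G :=
    ModuleCat.ofHom ((DFinsupp.lsingle (M := fun _ : ℕ => ↑G) 0).comp s.hom) with hαdef
  have hαapp : ∀ m : ↑M, α m = DFinsupp.single 0 (s m) := fun m => by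
    rw [hαdef]
    rfl
  set β : Pow G ⟶ Pow G := ModuleCat.ofHom βL with hββ
  have hses : IsShortExactSeq α β := by
    have key : ∀ y : Π₀ _ : ℕ, ↑G, βL y = 0 → ∃ m : ↑M, α m = y := by
      intro y hy
      have hcomp : ∀ i : ℕ, (y i - σ (y i)) + σ (y (i+1)) = 0 := by
        intro i
        have h1 : βL y i = (0 : Π₀ _ : ℕ, ↑G) i := congrArg (fun z : Π₀ _ : ℕ, ↑G => z i) hy
        rw [hβapp, DFinsupp.zero_apply] at h1
        exact h1
      have hr1 : ∀ i : ℕ, r (y (i+1)) = 0 := by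
        intro i
        have h2 := congrArg (ConcreteCategory.hom r) (hcomp i)
        rwa [map_add, map_sub, hrσ, sub_self, zero_add, hrσ, map_zero] at h2
      have hσ1 : ∀ i : ℕ, σ (y (i+1)) = 0 := by
        intro i
        rw [hσapp, hr1, map_zero]
      have hzero : ∀ i : ℕ, y (i+1) = 0 := by
        intro i
        have h3 := hcomp (i+1)
        rwa [hσ1 i, hσ1 (i+1), sub_zero, add_zero] at h3
      have hy0 : y 0 = σ (y 0) := by
        have h4 := hcomp 0
        rw [hσ1 0] at h4
        rw [add_zero] at h4
        exact sub_eq_zero.mp h4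
      refine ⟨r (y 0), ?_⟩
      rw [hαapp]
      refine DFinsupp.ext fun i => ?_
      cases i with
      | zero =>
        rw [DFinsupp.single_eq_same]
        rw [← hσapp, ← hy0]
      | succ i =>
        rw [DFinsupp.single_eq_of_ne (Nat.succ_ne_zero i), hzero i]
    refine ses_mk _ _ ?_ ?_ ?_
    · intro a b hab
      rw [hαapp, hαapp] at hab
      have h0 : s a = s b := by
        simpa using congrArg (fun z : Π₀ _ : ℕ, ↑G => z 0) hab
      calc a = r (s a) := (hret a).symm
      _ = r (s b) := by rw [h0]
      _ = b := hret b
    · intro y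
      exact ⟨ξ y, hβξ y⟩
    · intro y
      constructor
      · intro hy
        exact key y hy
      · rintro ⟨m, rfl⟩
        rw [hαapp]
        show βL (DFinsupp.single 0 (s m)) = 0
        rw [hβsingle, hσs, sub_self, DFinsupp.single_zero, hdown_single0, add_zero]
  have hW : gpdLE n (Pow G) := gpd_pow hG
  exact ker_gen n n α β hses hW hW

end GPaux

/-- The class of modules of finite Gorenstein projective dimension is closed under
extensions and under direct summands. -/
theorem finite_gpd_closed_extensions_and_summands {A : Type u} [Ring A] :
    (∀ {X Y Z : ModuleCat.{u} A} (f : X ⟶ Y) (g : Y ⟶ Z), IsShortExactSeq f g →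
      (∃ n : ℕ, gpdLE n X) → (∃ n : ℕ, gpdLE n Z) → ∃ n : ℕ, gpdLE n Y) ∧
    (∀ {G M : ModuleCat.{u} A} (s : M ⟶ G) (r : G ⟶ M), s ≫ r = 𝟙 M →
      (∃ n : ℕ, gpdLE n G) → ∃ n : ℕ, gpdLE n M) := by
  constructor
  · rintro X Y Z f g hses ⟨n, hX⟩ ⟨m, hZ⟩
    exact (GPaux.D_and_C m).1 n f g hses hX hZ
  · rintro G M s r hsr ⟨n, hG⟩
    exact GPaux.summand s r hsr hG
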